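/- Let K be a field with a non-archimedean absolute value, f ∈ K[z] monic of degree d ≥ 2 splitting over K̄, and φ(x,y) = (y, x + f(y)). If P = (x,y) lies in the filled Julia set K_φ = {P : ‖φ^N(P)‖ bounded as N → ±∞}, then |f(x)| ≤ ρ(f) and |f(y)| ≤ ρ(f), and there exist roots ζ, ζ' of f with |y − ζ| ≤ 1 and |x − ζ'| ≤ 1. In particular, K_φ is contained in the union over Q ∈ Δ_f of the closed unit polydisks centered at Q. -/

import Mathlib

open Polynomial

section Helpers

variable {K : Type*} [Field K] (v : AbsoluteValue K ℝ)

lemma na_add_eq (hna : IsNonarchimedean v) {x y : K} (h : v y < v x) :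
    v (x + y) = v x := by
  refine le_antisymm ((hna x y).trans (max_le le_rfl h.le)) ?_
  by_contra hlt
  push_neg at hlt
  have hx : x = (x + y) + (-y) := by ring
  have : v x ≤ max (v (x + y)) (v (-y)) := by
    conv_lhs => rw [hx]
    exact hna _ _
  rw [v.map_neg] at this
  have : v x < v x := lt_of_le_of_lt this (max_lt hlt h)
  exact absurd this (lt_irrefl _)

lemma na_sub_le (hna : IsNonarchimedean v) (x y : K) :
    v (x - y) ≤ max (v x) (v y) := by
  rw [sub_eq_add_neg]
  exact (hna x (-y)).trans (by rw [v.map_neg])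

lemma one_lt_multiset_prod (s : Multiset ℝ) (h0 : s ≠ 0) (h : ∀ x ∈ s, 1 < x) :
    1 < s.prod := by
  induction s using Multiset.induction_on with
  | empty => exact absurd rfl h0
  | cons a t ih =>
    rw [Multiset.prod_cons]
    have ha : 1 < a := h a (Multiset.mem_cons_self a t)
    rcases eq_or_ne t 0 with rfl | ht
    · simpa using ha
    · have htp : 1 < t.prod := ih ht (fun x hx => h x (Multiset.mem_cons_of_mem hx))
      nlinarith

lemma eval_prod_roots {f : K[X]} (hmonic : f.Monic) (hsplit : f.Splits)
    (z : K) : v (f.eval z) = (f.roots.map fun a => v (z - a)).prod := by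
  conv_lhs => rw [hsplit.eq_prod_roots_of_monic hmonic]
  rw [eval_multiset_prod, Multiset.map_map, map_multiset_prod, Multiset.map_map]
  congr 1
  apply Multiset.map_congr rfl
  intro a _
  simp

/-- if `z` is farther than `ρ` from the root `ζ₀`, then `v (f z) = v (z - ζ₀) ^ d`. -/
lemma far_val (hna : IsNonarchimedean v) {f : K[X]} (hmonic : f.Monic)
    (hsplit : f.Splits) {d : ℕ} (hdeg : f.natDegree = d)
    {ρ : ℝ} (hρ2 : ∀ ζ₁ ζ₂ : K, f.eval ζ₁ = 0 → f.eval ζ₂ = 0 → v (ζ₁ - ζ₂) ≤ ρ)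
    {ζ₀ : K} (hζ₀ : f.eval ζ₀ = 0) {z : K} (h : ρ < v (z - ζ₀)) :
    v (f.eval z) = v (z - ζ₀) ^ d := by
  rw [eval_prod_roots v hmonic hsplit]
  have hcard : f.roots.card = d := (splits_iff_card_roots.mp hsplit).trans hdeg
  have hmap : f.roots.map (fun a => v (z - a)) = f.roots.map (fun _ => v (z - ζ₀)) := by
    apply Multiset.map_congr rfl
    intro a ha
    have haroot : f.eval a = 0 := isRoot_of_mem_roots ha
    have hle : v (ζ₀ - a) < v (z - ζ₀) := lt_of_le_of_lt (hρ2 ζ₀ a hζ₀ haroot) h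
    have : z - a = (z - ζ₀) + (ζ₀ - a) := by ring
    rw [this, na_add_eq v hna hle]
  rw [hmap, Multiset.map_const', Multiset.prod_replicate, hcard]

/-- Generic escape lemma for a Hénon-like map `g`. -/
lemma escape (hna : IsNonarchimedean v) {f : K[X]} (hmonic : f.Monic)
    (hsplit : f.Splits) {d : ℕ} (hd : 2 ≤ d) (hdeg : f.natDegree = d)
    {ρ : ℝ} (hρ1 : 1 ≤ ρ)
    (hρ2 : ∀ ζ₁ ζ₂ : K, f.eval ζ₁ = 0 → f.eval ζ₂ = 0 → v (ζ₁ - ζ₂) ≤ ρ)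
    {ζ₀ : K} (hζ₀ : f.eval ζ₀ = 0)
    (g : K × K → K × K) (hg1 : ∀ Q, (g Q).1 = Q.2)
    (hg2 : ∀ Q, v ((g Q).2 - Q.1) = v (f.eval Q.2))
    (Q : K × K) (h1 : ρ < v (Q.2 - ζ₀)) (h2 : v (Q.1 - ζ₀) < v (Q.2 - ζ₀) ^ d) :
    ∀ n : ℕ, v (Q.2 - ζ₀) ^ (n + 1) ≤ v ((g^[n] Q).2 - ζ₀) := by
  set t := v (Q.2 - ζ₀) with ht
  have ht1 : 1 < t := lt_of_le_of_lt hρ1 h1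
  have ht0 : (0:ℝ) ≤ t := le_trans zero_le_one ht1.le
  -- the invariant
  have key : ∀ n : ℕ, ρ < v ((g^[n] Q).2 - ζ₀) ∧
      v ((g^[n] Q).1 - ζ₀) < v ((g^[n] Q).2 - ζ₀) ^ d ∧
      t ^ (n + 1) ≤ v ((g^[n] Q).2 - ζ₀) := by
    intro n
    induction n with
    | zero => exact ⟨h1, h2, by simpa using le_rfl⟩
    | succ n ih =>
      obtain ⟨ihρ, ihlt, ihpow⟩ := ih
      set R := g^[n] Q with hR
      set u := v (R.2 - ζ₀) with hu
      have hu1 : 1 < u := lt_of_le_of_lt hρ1 ihρ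
      have hu0 : (0:ℝ) ≤ u := le_trans zero_le_one hu1.le
      have hult : u < u ^ d := by
        calc u = u ^ 1 := (pow_one u).symm
        _ < u ^ d := pow_lt_pow_right₀ hu1 (by omega)
      have hfar : v (f.eval R.2) = u ^ d :=
        far_val v hna hmonic hsplit hdeg hρ2 hζ₀ ihρ
      have hstep : v ((g R).2 - ζ₀) = u ^ d := by
        have hsplit2 : (g R).2 - ζ₀ = ((g R).2 - R.1) + (R.1 - ζ₀) := by ring
        have hlt : v (R.1 - ζ₀) < v ((g R).2 - R.1) := by
          rw [hg2 R, hfar]; exact ihlt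
        rw [hsplit2, na_add_eq v hna hlt, hg2 R, hfar]
      rw [Function.iterate_succ_apply', ← hR]
      refine ⟨?_, ?_, ?_⟩
      · rw [hstep]
        exact lt_of_lt_of_le ihρ (le_trans hult.le le_rfl)
      · rw [hstep, hg1 R, ← hu]
        calc u < u ^ d := hult
        _ ≤ (u ^ d) ^ d := le_self_pow₀ (one_le_pow₀ hu1.le) (by omega)
      · rw [hstep]
        calc t ^ (n + 1 + 1) ≤ t ^ ((n + 1) * d) := by
              apply pow_le_pow_right₀ ht1.le
              calc n + 1 + 1 ≤ (n + 1) * 2 := by omega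
              _ ≤ (n + 1) * d := Nat.mul_le_mul_left _ hd
        _ = (t ^ (n + 1)) ^ d := by rw [pow_mul]
        _ ≤ u ^ d := pow_le_pow_left₀ (by positivity) ihpow d
  intro n
  exact (key n).2.2

/-- both coordinates of a point with bounded full orbit are within `ρ` of any root. -/
lemma both_le (hna : IsNonarchimedean v) {f : K[X]} (hmonic : f.Monic)
    (hsplit : f.Splits) {d : ℕ} (hd : 2 ≤ d) (hdeg : f.natDegree = d)
    {ρ : ℝ} (hρ1 : 1 ≤ ρ)
    (hρ2 : ∀ ζ₁ ζ₂ : K, f.eval ζ₁ = 0 → f.eval ζ₂ = 0 → v (ζ₁ - ζ₂) ≤ ρ)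
    {ζ₀ : K} (hζ₀ : f.eval ζ₀ = 0)
    (φ φi : K × K → K × K)
    (hφ : ∀ P, φ P = (P.2, P.1 + f.eval P.2))
    (hφi : ∀ P, φi P = (P.2 - f.eval P.1, P.1))
    (Q : K × K)
    (hbdd : ∃ C : ℝ, ∀ N : ℕ,
      max (v (φ^[N] Q).1) (v (φ^[N] Q).2) ≤ C ∧
      max (v (φi^[N] Q).1) (v (φi^[N] Q).2) ≤ C) :
    v (Q.1 - ζ₀) ≤ ρ ∧ v (Q.2 - ζ₀) ≤ ρ := by
  obtain ⟨C, hC⟩ := hbdd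
  set B : ℝ := C + v ζ₀ with hB
  -- forward escape is impossible
  have hfwd : ¬ (ρ < v (Q.2 - ζ₀) ∧ v (Q.1 - ζ₀) < v (Q.2 - ζ₀) ^ d) := by
    rintro ⟨h1, h2⟩
    have hesc := escape v hna hmonic hsplit hd hdeg hρ1 hρ2 hζ₀ φ
      (fun R => by rw [hφ R]) (fun R => by rw [hφ R]; simp) Q h1 h2
    have hbound : ∀ n : ℕ, v ((φ^[n] Q).2 - ζ₀) ≤ B := by
      intro n
      calc v ((φ^[n] Q).2 - ζ₀) ≤ v (φ^[n] Q).2 + v ζ₀ := by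
            rw [sub_eq_add_neg]
            exact (v.add_le _ _).trans (by rw [v.map_neg])
      _ ≤ C + v ζ₀ := by
            have := (hC n).1
            linarith [le_max_right (v (φ^[n] Q).1) (v (φ^[n] Q).2)]
    have ht1 : 1 < v (Q.2 - ζ₀) := lt_of_le_of_lt hρ1 h1
    obtain ⟨m, hm⟩ := pow_unbounded_of_one_lt B ht1
    have : v (Q.2 - ζ₀) ^ m ≤ v (Q.2 - ζ₀) ^ (m + 1) :=
      pow_le_pow_right₀ ht1.le (by omega)
    linarith [hesc m, hbound m]
  -- backward escape is impossible
  have hbwd : ¬ (ρ < v (Q.1 - ζ₀) ∧ v (Q.2 - ζ₀) < v (Q.1 - ζ₀) ^ d) := by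
    rintro ⟨h1, h2⟩
    set g : K × K → K × K := fun R => (R.2, R.1 - f.eval R.2) with hg
    have hswap : ∀ n : ℕ, g^[n] (Q.2, Q.1) = ((φi^[n] Q).2, (φi^[n] Q).1) := by
      intro n
      induction n with
      | zero => rfl
      | succ n ih =>
        rw [Function.iterate_succ_apply', Function.iterate_succ_apply', ih, hφi]
    have hesc := escape v hna hmonic hsplit hd hdeg hρ1 hρ2 hζ₀ g
      (fun R => rfl) (fun R => by
        show v (R.1 - f.eval R.2 - R.1) = _
        rw [show R.1 - f.eval R.2 - R.1 = -(f.eval R.2) by ring, v.map_neg])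
      (Q.2, Q.1) h1 h2
    have hbound : ∀ n : ℕ, v ((g^[n] (Q.2, Q.1)).2 - ζ₀) ≤ B := by
      intro n
      rw [hswap n]
      calc v ((φi^[n] Q).1 - ζ₀) ≤ v (φi^[n] Q).1 + v ζ₀ := by
            rw [sub_eq_add_neg]
            exact (v.add_le _ _).trans (by rw [v.map_neg])
      _ ≤ C + v ζ₀ := by
            have := (hC n).2
            linarith [le_max_left (v (φi^[n] Q).1) (v (φi^[n] Q).2)]
    have ht1 : 1 < v (Q.1 - ζ₀) := lt_of_le_of_lt hρ1 h1
    obtain ⟨m, hm⟩ := pow_unbounded_of_one_lt B ht1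
    have : v (Q.1 - ζ₀) ^ m ≤ v (Q.1 - ζ₀) ^ (m + 1) :=
      pow_le_pow_right₀ ht1.le (by omega)
    linarith [hesc m, hbound m]
  constructor
  · by_contra hs
    push_neg at hs
    set s := v (Q.1 - ζ₀) with hss
    have hs1 : 1 < s := lt_of_le_of_lt hρ1 hs
    rcases lt_or_ge (v (Q.2 - ζ₀)) (s ^ d) with h | h
    · exact hbwd ⟨hs, h⟩
    · -- s ^ d ≤ t, forward escape
      have ht : ρ < v (Q.2 - ζ₀) := by
        have : s ≤ s ^ d := le_self_pow₀ hs1.le (by omega)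
        linarith
      have : s < v (Q.2 - ζ₀) ^ d := by
        have h1 : s ≤ s ^ d := le_self_pow₀ hs1.le (by omega)
        have ht1 : 1 < v (Q.2 - ζ₀) := lt_of_le_of_lt hρ1 ht
        have h2 : v (Q.2 - ζ₀) < v (Q.2 - ζ₀) ^ d := by
          calc v (Q.2 - ζ₀) = v (Q.2 - ζ₀) ^ 1 := (pow_one _).symm
          _ < v (Q.2 - ζ₀) ^ d := pow_lt_pow_right₀ ht1 (by omega)
        linarith
      exact hfwd ⟨ht, this⟩
  · by_contra ht
    push_neg at ht
    set t := v (Q.2 - ζ₀) with hts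
    have ht1 : 1 < t := lt_of_le_of_lt hρ1 ht
    rcases lt_or_ge (v (Q.1 - ζ₀)) (t ^ d) with h | h
    · exact hfwd ⟨ht, h⟩
    · have hs : ρ < v (Q.1 - ζ₀) := by
        have : t ≤ t ^ d := le_self_pow₀ ht1.le (by omega)
        linarith
      have : t < v (Q.1 - ζ₀) ^ d := by
        have h1 : t ≤ t ^ d := le_self_pow₀ ht1.le (by omega)
        have hs1 : 1 < v (Q.1 - ζ₀) := lt_of_le_of_lt hρ1 hs
        have h2 : v (Q.1 - ζ₀) < v (Q.1 - ζ₀) ^ d := by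
          calc v (Q.1 - ζ₀) = v (Q.1 - ζ₀) ^ 1 := (pow_one _).symm
          _ < v (Q.1 - ζ₀) ^ d := pow_lt_pow_right₀ hs1 (by omega)
        linarith
      exact hbwd ⟨hs, this⟩

/-- a point with small `f`-value is close to a root. -/
lemma close_to_root (hna : IsNonarchimedean v) {f : K[X]} (hmonic : f.Monic)
    (hsplit : f.Splits) {d : ℕ} (hd : 2 ≤ d) (hdeg : f.natDegree = d)
    {ρ : ℝ} (hρ1 : 1 ≤ ρ)
    (hρ3 : ρ = 1 ∨ ∃ ζ₁ ζ₂ : K, f.eval ζ₁ = 0 ∧ f.eval ζ₂ = 0 ∧ v (ζ₁ - ζ₂) = ρ)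
    (z : K) (hz : v (f.eval z) ≤ ρ) :
    ∃ ζ : K, f.eval ζ = 0 ∧ v (z - ζ) ≤ 1 := by
  by_contra h
  push_neg at h
  have hcard : f.roots.card = d := (splits_iff_card_roots.mp hsplit).trans hdeg
  have hprod : v (f.eval z) = (f.roots.map fun a => v (z - a)).prod :=
    eval_prod_roots v hmonic hsplit z
  have hgt : ∀ r ∈ f.roots.map (fun a => v (z - a)), 1 < r := by
    intro r hr
    obtain ⟨a, ha, rfl⟩ := Multiset.mem_map.mp hr
    exact h a (isRoot_of_mem_roots ha)
  rcases hρ3 with rfl | ⟨ζ₁, ζ₂, hz1, hz2, heq⟩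
  · have hne : f.roots.map (fun a => v (z - a)) ≠ 0 := by
      simp only [ne_eq, Multiset.map_eq_zero]
      intro h0
      rw [h0] at hcard
      simp at hcard
      omega
    have := one_lt_multiset_prod _ hne hgt
    rw [← hprod] at this
    linarith
  · -- some root is at distance ≥ ρ from z
    have hmax : ρ ≤ max (v (z - ζ₁)) (v (z - ζ₂)) := by
      have hr : ζ₁ - ζ₂ = (z - ζ₂) - (z - ζ₁) := by ring
      calc ρ = v (ζ₁ - ζ₂) := heq.symm
      _ ≤ max (v (z - ζ₂)) (v (z - ζ₁)) := by rw [hr]; exact na_sub_le v hna _ _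
      _ ≤ max (v (z - ζ₁)) (v (z - ζ₂)) := le_of_eq (max_comm _ _)
    have : ∃ ζ : K, f.eval ζ = 0 ∧ ρ ≤ v (z - ζ) := by
      rcases le_max_iff.mp hmax with h1 | h2
      · exact ⟨ζ₁, hz1, h1⟩
      · exact ⟨ζ₂, hz2, h2⟩
    obtain ⟨ζ, hζroot, hζfar⟩ := this
    have hζmem : ζ ∈ f.roots := by
      rw [mem_roots hmonic.ne_zero]
      exact hζroot
    obtain ⟨rest, hrest⟩ := Multiset.exists_cons_of_mem hζmem
    have hrestne : rest ≠ 0 := by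
      intro h0
      rw [hrest, h0] at hcard
      simp at hcard
      omega
    have hrestmap : (rest.map fun a => v (z - a)) ≠ 0 := by
      simpa only [ne_eq, Multiset.map_eq_zero] using hrestne
    have hrestgt : ∀ r ∈ rest.map (fun a => v (z - a)), 1 < r := by
      intro r hr
      apply hgt
      rw [hrest, Multiset.map_cons]
      exact Multiset.mem_cons_of_mem hr
    have hrestprod : 1 < (rest.map fun a => v (z - a)).prod :=
      one_lt_multiset_prod _ hrestmap hrestgt
    have : ρ < v (f.eval z) := by
      rw [hprod, hrest, Multiset.map_cons, Multiset.prod_cons]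
      have hρ0 : (0:ℝ) < ρ := lt_of_lt_of_le zero_lt_one hρ1
      calc ρ = ρ * 1 := (mul_one ρ).symm
      _ < v (z - ζ) * (rest.map fun a => v (z - a)).prod := by
          apply mul_lt_mul' hζfar hrestprod zero_le_one
          linarith
    linarith

end Helpers

/-- every point `P = (x,y)` of the filled Julia set of the Hénon map
`φ(x,y) = (y, x+f(y))` satisfies `|f(x)|, |f(y)| ≤ ρ(f)`, and both coordinates are
within distance 1 of roots of `f`; hence the filled Julia set lies in the union of
unit polydisks centered at points of `Δ_f`. -/
theorem stmt9 {K : Type*} [Field K] (v : AbsoluteValue K ℝ)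
    (hna : IsNonarchimedean v) (d : ℕ) (hd : 2 ≤ d)
    (f : K[X]) (hmonic : f.Monic) (hdeg : f.natDegree = d)
    (hsplit : f.Splits)
    (ρ : ℝ) (hρ1 : 1 ≤ ρ)
    (hρ2 : ∀ ζ₁ ζ₂ : K, f.eval ζ₁ = 0 → f.eval ζ₂ = 0 → v (ζ₁ - ζ₂) ≤ ρ)
    (hρ3 : ρ = 1 ∨ ∃ ζ₁ ζ₂ : K, f.eval ζ₁ = 0 ∧ f.eval ζ₂ = 0 ∧ v (ζ₁ - ζ₂) = ρ)
    (φ φi : K × K → K × K)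
    (hφ : ∀ P, φ P = (P.2, P.1 + f.eval P.2))
    (hφi : ∀ P, φi P = (P.2 - f.eval P.1, P.1))
    (P : K × K)
    (hbdd : ∃ C : ℝ, ∀ N : ℕ,
      max (v (φ^[N] P).1) (v (φ^[N] P).2) ≤ C ∧
      max (v (φi^[N] P).1) (v (φi^[N] P).2) ≤ C) :
    v (f.eval P.1) ≤ ρ ∧ v (f.eval P.2) ≤ ρ ∧
    ∃ ζ ζ' : K, f.eval ζ = 0 ∧ f.eval ζ' = 0 ∧
      v (P.2 - ζ) ≤ 1 ∧ v (P.1 - ζ') ≤ 1 := by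
  obtain ⟨C, hC⟩ := hbdd
  -- find a root ζ₀
  have hcard : f.roots.card = d := (splits_iff_card_roots.mp hsplit).trans hdeg
  have hpos : 0 < f.roots.card := by omega
  obtain ⟨ζ₀, hζ₀mem⟩ := Multiset.card_pos_iff_exists_mem.mp hpos
  have hζ₀ : f.eval ζ₀ = 0 := isRoot_of_mem_roots hζ₀mem
  -- inverse identities
  have hinv1 : ∀ R : K × K, φi (φ R) = R := by
    intro R
    rw [hφ, hφi]
    simp
  have hinv2 : ∀ R : K × K, φ (φi R) = R := by
    intro R
    rw [hφi, hφ]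
    simp
  -- bounded orbits for P, φ P, φi P
  have hbP : v (P.1 - ζ₀) ≤ ρ ∧ v (P.2 - ζ₀) ≤ ρ :=
    both_le v hna hmonic hsplit hd hdeg hρ1 hρ2 hζ₀ φ φi hφ hφi P ⟨C, hC⟩
  have hbφP : v ((φ P).1 - ζ₀) ≤ ρ ∧ v ((φ P).2 - ζ₀) ≤ ρ := by
    apply both_le v hna hmonic hsplit hd hdeg hρ1 hρ2 hζ₀ φ φi hφ hφi (φ P)
    refine ⟨C, fun N => ⟨?_, ?_⟩⟩
    · rw [← Function.iterate_succ_apply]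
      exact (hC (N + 1)).1
    · cases N with
      | zero => simpa using (hC 1).1
      | succ n =>
        rw [Function.iterate_succ_apply, hinv1]
        exact (hC n).2
  have hbφiP : v ((φi P).1 - ζ₀) ≤ ρ ∧ v ((φi P).2 - ζ₀) ≤ ρ := by
    apply both_le v hna hmonic hsplit hd hdeg hρ1 hρ2 hζ₀ φ φi hφ hφi (φi P)
    refine ⟨C, fun N => ⟨?_, ?_⟩⟩
    · cases N with
      | zero => simpa using (hC 1).2
      | succ n =>
        rw [Function.iterate_succ_apply, hinv2]
        exact (hC n).1
    · rw [← Function.iterate_succ_apply]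
      exact (hC (N + 1)).2
  -- f-value bounds
  have hfy : v (f.eval P.2) ≤ ρ := by
    have heq : f.eval P.2 = ((φ P).2 - ζ₀) - (P.1 - ζ₀) := by
      rw [hφ]; ring
    rw [heq]
    exact (na_sub_le v hna _ _).trans (max_le hbφP.2 hbP.1)
  have hfx : v (f.eval P.1) ≤ ρ := by
    have heq : f.eval P.1 = (P.2 - ζ₀) - ((φi P).1 - ζ₀) := by
      rw [hφi]; ring
    rw [heq]
    exact (na_sub_le v hna _ _).trans (max_le hbP.2 hbφiP.1)
  obtain ⟨ζ, hζr, hζc⟩ := close_to_root v hna hmonic hsplit hd hdeg hρ1 hρ3 P.2 hfy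
  obtain ⟨ζ', hζ'r, hζ'c⟩ := close_to_root v hna hmonic hsplit hd hdeg hρ1 hρ3 P.1 hfx
  exact ⟨hfx, hfy, ζ, ζ', hζr, hζ'r, hζc, hζ'c⟩
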